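/- Consider the general ansatz N^{μν,ρσ,λ} for an expression antisymmetric in μ↔ν, antisymmetric in ρ↔σ, and antisymmetric under exchanging the pair (μν) with (ρσ), built from six Lorentz-covariant monomials in anticommuting u's and one derivative du, with coefficients a₁,…,a₆ (as in the paper: a₁(d^λu^μ u^ν u^ρ u^σ − …) + a₂(d^μu^λ u^ν u^ρ u^σ − …) + a₃(d^μu^ν u^ρ u^σ u^λ − …) + a₄(d^μu^ρ u^ν u^σ u^λ ± seven more terms) + a₅ η-terms with d·u + a₆ η-terms with d·u). Then the constraint 𝒮_{σλ} N^{μν,ρσ,λ} = 0 (symmetrization of the cyclic sum over σ and λ slots as in 𝒮_{σλ}N(T^{μν},T^{ρσ})^{λ}=0, taken for all index values) forces a₁ = a₂ = a₃ = a₄ = a₅ = a₆ = 0, i.e. N^{μν,ρσ,λ} = 0. -/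

import Mathlib

/-- The Minkowski metric `η = diag(1,-1,-1,-1)` with rational values. -/
def etaQ (μ ν : Fin 4) : ℚ := if μ = ν then (if μ = (0 : Fin 4) then 1 else -1) else 0

/-- Index set for the odd generators: `inl μ` labels `u^μ`, `inr (ν,μ)` labels `d^ν u^μ`. -/
abbrev GIdx := Sum (Fin 4) (Fin 4 × Fin 4)

/-- The free Grassmann algebra on the generators `u^μ` and `d^νu^μ`. -/
noncomputable abbrev GrAlg := ExteriorAlgebra ℚ (GIdx → ℚ)

/-- The Grassmann-odd generator `u^μ`. -/
noncomputable def ug (μ : Fin 4) : GrAlg :=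
  ExteriorAlgebra.ι ℚ (Pi.single (Sum.inl μ) 1)

/-- The Grassmann-odd generator `d^ν u^μ` ("formal derivative"). -/
noncomputable def Dg (ν μ : Fin 4) : GrAlg :=
  ExteriorAlgebra.ι ℚ (Pi.single (Sum.inr (ν, μ)) 1)

/-- The divergence `d_α u^α = η_{αβ} d^α u^β`. -/
noncomputable def divu : GrAlg := ∑ α, ∑ β, etaQ α β • Dg α β

/-- The general six-parameter ansatz `N^{μν,ρσ,λ}` of Grigore (Section 4 (ix)),
antisymmetric in `μ↔ν`, in `ρ↔σ`, and under exchanging the pairs `(μν)` `(ρσ)`. -/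
noncomputable def Nansatz (a₁ a₂ a₃ a₄ a₅ a₆ : ℚ) (μ ν ρ σ lam : Fin 4) : GrAlg :=
    a₁ • (Dg lam μ * ug ν * ug ρ * ug σ - Dg lam ν * ug μ * ug ρ * ug σ
      - Dg lam ρ * ug σ * ug μ * ug ν + Dg lam σ * ug ρ * ug μ * ug ν)
  + a₂ • (Dg μ lam * ug ν * ug ρ * ug σ - Dg ν lam * ug μ * ug ρ * ug σ
      - Dg ρ lam * ug σ * ug μ * ug ν + Dg σ lam * ug ρ * ug μ * ug ν)
  + a₃ • (Dg μ ν * ug ρ * ug σ * ug lam - Dg ν μ * ug ρ * ug σ * ug lam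
      - Dg ρ σ * ug μ * ug ν * ug lam + Dg σ ρ * ug μ * ug ν * ug lam)
  + a₄ • (Dg μ ρ * ug ν * ug σ * ug lam - Dg ν ρ * ug μ * ug σ * ug lam
      - Dg μ σ * ug ν * ug ρ * ug lam + Dg ν σ * ug μ * ug ρ * ug lam
      - Dg ρ μ * ug σ * ug ν * ug lam + Dg σ μ * ug ρ * ug ν * ug lam
      + Dg ρ ν * ug σ * ug μ * ug lam - Dg σ ν * ug ρ * ug μ * ug lam)
  + a₅ • ((etaQ μ lam • (ug ν * ug ρ * ug σ) - etaQ ν lam • (ug μ * ug ρ * ug σ)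
      - etaQ ρ lam • (ug σ * ug μ * ug ν) + etaQ σ lam • (ug ρ * ug μ * ug ν)) * divu)
  + a₆ • ((etaQ μ ρ • (ug ν * ug σ * ug lam) - etaQ ν ρ • (ug μ * ug σ * ug lam)
      - etaQ μ σ • (ug ν * ug ρ * ug lam) + etaQ ν σ • (ug μ * ug ρ * ug lam)) * divu)

private theorem detFinFour (A : Matrix (Fin 4) (Fin 4) ℚ) : A.det =
    A 0 0 * (A 1 1 * (A 2 2 * A 3 3 - A 2 3 * A 3 2) - A 1 2 * (A 2 1 * A 3 3 - A 2 3 * A 3 1)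
      + A 1 3 * (A 2 1 * A 3 2 - A 2 2 * A 3 1))
  - A 0 1 * (A 1 0 * (A 2 2 * A 3 3 - A 2 3 * A 3 2) - A 1 2 * (A 2 0 * A 3 3 - A 2 3 * A 3 0)
      + A 1 3 * (A 2 0 * A 3 2 - A 2 2 * A 3 0))
  + A 0 2 * (A 1 0 * (A 2 1 * A 3 3 - A 2 3 * A 3 1) - A 1 1 * (A 2 0 * A 3 3 - A 2 3 * A 3 0)
      + A 1 3 * (A 2 0 * A 3 1 - A 2 1 * A 3 0))
  - A 0 3 * (A 1 0 * (A 2 1 * A 3 2 - A 2 2 * A 3 1) - A 1 1 * (A 2 0 * A 3 2 - A 2 2 * A 3 0)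
      + A 1 2 * (A 2 0 * A 3 1 - A 2 1 * A 3 0)) := by
  rw [Matrix.det_succ_row_zero]
  simp [Fin.sum_univ_succ, Matrix.det_fin_three, Fin.succAbove]
  ring

/-- Coefficient-extraction functional on `GrAlg`. -/
noncomputable def cfX (g : Fin 4 → GIdx) : GrAlg →ₗ[ℚ] ℚ :=
  ExteriorAlgebra.liftAlternating fun i => match i with
  | 4 => Matrix.detRowAlternating.compLinearMap (LinearMap.funLeft ℚ ℚ g)
  | _ => 0

lemma cfX_apply (g : Fin 4 → GIdx) (w x y z : GIdx → ℚ) :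
    cfX g (ExteriorAlgebra.ι ℚ w * ExteriorAlgebra.ι ℚ x * ExteriorAlgebra.ι ℚ y *
      ExteriorAlgebra.ι ℚ z) = Matrix.det (Matrix.of ![w ∘ g, x ∘ g, y ∘ g, z ∘ g]) := by
  rw [cfX, mul_assoc (ExteriorAlgebra.ι ℚ w * ExteriorAlgebra.ι ℚ x),
    mul_assoc (ExteriorAlgebra.ι ℚ w), ExteriorAlgebra.liftAlternating_ι_mul,
    ExteriorAlgebra.liftAlternating_ι_mul, ExteriorAlgebra.liftAlternating_ι_mul,
    ExteriorAlgebra.liftAlternating_ι]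
  simp only [AlternatingMap.curryLeft_apply_apply]
  show Matrix.detRowAlternating.compLinearMap (LinearMap.funLeft ℚ ℚ g) _ = _
  simp only [AlternatingMap.compLinearMap_apply, Matrix.detRowAlternating]
  congr 1
  ext i j
  fin_cases i <;> rfl

set_option maxHeartbeats 4000000 in
set_option maxRecDepth 40000 in
/-- The constraint `𝒮_{σλ} N^{μν,ρσ,λ} = 0` (symmetrization over the labels `σ`
and `λ`, for all index values) forces `a₁ = ⋯ = a₆ = 0`. -/
theorem symmetrized_constraint_forces_trivial_solution
    (a₁ a₂ a₃ a₄ a₅ a₆ : ℚ)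
    (hcon : ∀ μ ν ρ σ lam,
      Nansatz a₁ a₂ a₃ a₄ a₅ a₆ μ ν ρ σ lam
        + Nansatz a₁ a₂ a₃ a₄ a₅ a₆ μ ν ρ lam σ = 0) :
    a₁ = 0 ∧ a₂ = 0 ∧ a₃ = 0 ∧ a₄ = 0 ∧ a₅ = 0 ∧ a₆ = 0 := by
  have h1 := congrArg (cfX ![Sum.inr (0,0), Sum.inl 0, Sum.inl 1, Sum.inl 3]) (hcon 0 1 2 2 3)
  simp only [Nansatz, divu, Fin.sum_univ_four, etaQ, Fin.reduceEq, reduceIte,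
    one_smul, neg_smul, zero_smul, smul_zero, add_zero, zero_add, sub_zero, zero_sub,
    mul_add, mul_sub, add_mul, sub_mul, smul_mul_assoc, mul_smul_comm, smul_smul,
    mul_zero, zero_mul, smul_neg, neg_neg, mul_one, smul_add, smul_sub, mul_neg, neg_mul,
    false_and, and_false, and_self, if_true, if_false, neg_zero, neg_add_rev,
    ug, Dg, cfX_apply, map_add, map_sub, map_neg, map_smul, map_zero, smul_eq_mul,
    detFinFour, Matrix.of_apply, Matrix.cons_val_zero, Matrix.cons_val_one,
    Matrix.cons_val_two, Matrix.cons_val_three, Matrix.head_cons, Matrix.tail_cons,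
    Function.comp_apply, Pi.single_apply, Sum.inr.injEq, Sum.inl.injEq, Prod.mk.injEq,
    reduceCtorEq] at h1
  norm_num at h1
  have h2 := congrArg (cfX ![Sum.inr (0,1), Sum.inl 0, Sum.inl 2, Sum.inl 3]) (hcon 0 1 2 0 3)
  simp only [Nansatz, divu, Fin.sum_univ_four, etaQ, Fin.reduceEq, reduceIte,
    one_smul, neg_smul, zero_smul, smul_zero, add_zero, zero_add, sub_zero, zero_sub,
    mul_add, mul_sub, add_mul, sub_mul, smul_mul_assoc, mul_smul_comm, smul_smul,
    mul_zero, zero_mul, smul_neg, neg_neg, mul_one, smul_add, smul_sub, mul_neg, neg_mul,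
    false_and, and_false, and_self, if_true, if_false, neg_zero, neg_add_rev,
    ug, Dg, cfX_apply, map_add, map_sub, map_neg, map_smul, map_zero, smul_eq_mul,
    detFinFour, Matrix.of_apply, Matrix.cons_val_zero, Matrix.cons_val_one,
    Matrix.cons_val_two, Matrix.cons_val_three, Matrix.head_cons, Matrix.tail_cons,
    Function.comp_apply, Pi.single_apply, Sum.inr.injEq, Sum.inl.injEq, Prod.mk.injEq,
    reduceCtorEq] at h2
  have h3 := congrArg (cfX ![Sum.inr (1,0), Sum.inl 0, Sum.inl 2, Sum.inl 3]) (hcon 0 1 2 0 3)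
  simp only [Nansatz, divu, Fin.sum_univ_four, etaQ, Fin.reduceEq, reduceIte,
    one_smul, neg_smul, zero_smul, smul_zero, add_zero, zero_add, sub_zero, zero_sub,
    mul_add, mul_sub, add_mul, sub_mul, smul_mul_assoc, mul_smul_comm, smul_smul,
    mul_zero, zero_mul, smul_neg, neg_neg, mul_one, smul_add, smul_sub, mul_neg, neg_mul,
    false_and, and_false, and_self, if_true, if_false, neg_zero, neg_add_rev,
    ug, Dg, cfX_apply, map_add, map_sub, map_neg, map_smul, map_zero, smul_eq_mul,
    detFinFour, Matrix.of_apply, Matrix.cons_val_zero, Matrix.cons_val_one,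
    Matrix.cons_val_two, Matrix.cons_val_three, Matrix.head_cons, Matrix.tail_cons,
    Function.comp_apply, Pi.single_apply, Sum.inr.injEq, Sum.inl.injEq, Prod.mk.injEq,
    reduceCtorEq] at h3
  have h4 := congrArg (cfX ![Sum.inr (2,0), Sum.inl 0, Sum.inl 1, Sum.inl 3]) (hcon 0 1 2 0 3)
  simp only [Nansatz, divu, Fin.sum_univ_four, etaQ, Fin.reduceEq, reduceIte,
    one_smul, neg_smul, zero_smul, smul_zero, add_zero, zero_add, sub_zero, zero_sub,
    mul_add, mul_sub, add_mul, sub_mul, smul_mul_assoc, mul_smul_comm, smul_smul,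
    mul_zero, zero_mul, smul_neg, neg_neg, mul_one, smul_add, smul_sub, mul_neg, neg_mul,
    false_and, and_false, and_self, if_true, if_false, neg_zero, neg_add_rev,
    ug, Dg, cfX_apply, map_add, map_sub, map_neg, map_smul, map_zero, smul_eq_mul,
    detFinFour, Matrix.of_apply, Matrix.cons_val_zero, Matrix.cons_val_one,
    Matrix.cons_val_two, Matrix.cons_val_three, Matrix.head_cons, Matrix.tail_cons,
    Function.comp_apply, Pi.single_apply, Sum.inr.injEq, Sum.inl.injEq, Prod.mk.injEq,
    reduceCtorEq] at h4
  have h5 := congrArg (cfX ![Sum.inr (0,2), Sum.inl 0, Sum.inl 1, Sum.inl 3]) (hcon 0 1 2 0 3)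
  simp only [Nansatz, divu, Fin.sum_univ_four, etaQ, Fin.reduceEq, reduceIte,
    one_smul, neg_smul, zero_smul, smul_zero, add_zero, zero_add, sub_zero, zero_sub,
    mul_add, mul_sub, add_mul, sub_mul, smul_mul_assoc, mul_smul_comm, smul_smul,
    mul_zero, zero_mul, smul_neg, neg_neg, mul_one, smul_add, smul_sub, mul_neg, neg_mul,
    false_and, and_false, and_self, if_true, if_false, neg_zero, neg_add_rev,
    ug, Dg, cfX_apply, map_add, map_sub, map_neg, map_smul, map_zero, smul_eq_mul,
    detFinFour, Matrix.of_apply, Matrix.cons_val_zero, Matrix.cons_val_one,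
    Matrix.cons_val_two, Matrix.cons_val_three, Matrix.head_cons, Matrix.tail_cons,
    Function.comp_apply, Pi.single_apply, Sum.inr.injEq, Sum.inl.injEq, Prod.mk.injEq,
    reduceCtorEq] at h5
  have h6 := congrArg (cfX ![Sum.inr (1,1), Sum.inl 1, Sum.inl 2, Sum.inl 3]) (hcon 0 1 2 0 3)
  simp only [Nansatz, divu, Fin.sum_univ_four, etaQ, Fin.reduceEq, reduceIte,
    one_smul, neg_smul, zero_smul, smul_zero, add_zero, zero_add, sub_zero, zero_sub,
    mul_add, mul_sub, add_mul, sub_mul, smul_mul_assoc, mul_smul_comm, smul_smul,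
    mul_zero, zero_mul, smul_neg, neg_neg, mul_one, smul_add, smul_sub, mul_neg, neg_mul,
    false_and, and_false, and_self, if_true, if_false, neg_zero, neg_add_rev,
    ug, Dg, cfX_apply, map_add, map_sub, map_neg, map_smul, map_zero, smul_eq_mul,
    detFinFour, Matrix.of_apply, Matrix.cons_val_zero, Matrix.cons_val_one,
    Matrix.cons_val_two, Matrix.cons_val_three, Matrix.head_cons, Matrix.tail_cons,
    Function.comp_apply, Pi.single_apply, Sum.inr.injEq, Sum.inl.injEq, Prod.mk.injEq,
    reduceCtorEq] at h6
  refine ⟨by linarith, by linarith, by linarith, by linarith, by linarith, by linarith⟩
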